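/- Let (K, v) be an ordered valued field, P ∈ K[X] of degree d ≥ 1, and a < b in K. Let σ₀,…,σ_d ∈ {−1,+1} satisfy σ_k · P^[k](a) ≥ 0 and σ_k · P^[k](b) ≥ 0 for k = 0,…,d−1, and σ_d · (leading coefficient of P) > 0. Set ε_k = σ₀σ_k (so ε₀ = 1); for 0 ≤ k ≤ d−1 set a_k = a if ε_k ε_{k+1} = 1 and a_k = b if ε_k ε_{k+1} = −1; set ν_k = v(P^[k](a_k)) for 0 ≤ k ≤ d−1, ν_d = v(leading coefficient of P), and δ = v(b − a). Then there exist integers k₂,…,k_d with 1 ≤ k_j ≤ j for each j, such that for every x ∈ K with a ≤ x ≤ b, writing t₁ = (x − a)/(b − a), t₂ = 1 − t₁, τ₁ = v(t₁), τ₂ = v(t₂), and setting τ' = τ₁ if ε₁ = 1 and τ' = τ₂ if ε₁ = −1, one has v(P(x)) = min( ν₀, ν₁ + δ + τ', ν₂ + 2δ + k₂τ', …, ν_d + dδ + k_dτ' ). -/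

import Mathlib

/-- An ordered valuation on a linearly ordered field `K`: an additively-written valuation
`v : K → Γ ∪ {∞}` compatible with the order. -/
def IsOrderedValuation {K Γ : Type*} [Field K] [LinearOrder K] [IsStrictOrderedRing K]
    [AddCommGroup Γ] [LinearOrder Γ] [IsOrderedAddMonoid Γ] (v : K → WithTop Γ) : Prop :=
  (∀ x, v x = ⊤ ↔ x = 0) ∧
  (∀ x y, v (x * y) = v x + v y) ∧
  (∀ x y, min (v x) (v y) ≤ v (x + y)) ∧
  (∀ x y : K, 0 ≤ x → x ≤ y → v y ≤ v x)

section VB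
variable {K Γ : Type*} [Field K] [LinearOrder K] [IsStrictOrderedRing K] [AddCommGroup Γ] [LinearOrder Γ] [IsOrderedAddMonoid Γ]
  {v : K → WithTop Γ} (hv : IsOrderedValuation v)

include hv

lemma v_one : v 1 = 0 := by
  have h := hv.2.1 1 1
  rw [mul_one] at h
  rcases eq_or_ne (v 1) ⊤ with ht | ht
  · exact absurd ((hv.1 1).1 ht) one_ne_zero
  · lift v 1 to Γ using ht with g hg
    have : g = g + g := by exact_mod_cast h
    have : g = 0 := left_eq_add.mp this
    exact_mod_cast congrArg (WithTop.some) this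

lemma v_neg (x : K) : v (-x) = v x := by
  have hm1 : v (-1 : K) = 0 := by
    have h := hv.2.1 (-1 : K) (-1)
    rw [neg_mul_neg, one_mul, v_one hv] at h
    rcases eq_or_ne (v (-1 : K)) ⊤ with ht | ht
    · exact absurd ((hv.1 _).1 ht) (by norm_num)
    · lift v (-1 : K) to Γ using ht with g hg
      have h2 : g + g = (0 : Γ) := by exact_mod_cast h.symm
      have h3 : g = 0 := by
        rcases lt_trichotomy g 0 with h' | h' | h'
        · exact absurd h2 (by simpa using (add_lt_add h' h').ne)
        · exact h'
        · exact absurd h2 (by simpa using (add_lt_add h' h').ne')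
      exact_mod_cast congrArg WithTop.some h3
  have h4 := hv.2.1 (-1 : K) x
  rw [neg_one_mul, hm1, zero_add] at h4
  exact h4

lemma v_antitone {x y : K} (hx : 0 ≤ x) (hxy : x ≤ y) : v y ≤ v x := hv.2.2.2 x y hx hxy

lemma v_min_of_nonneg {x y : K} (hx : 0 ≤ x) (hy : 0 ≤ y) :
    v (x + y) = min (v x) (v y) := by
  refine le_antisymm ?_ (hv.2.2.1 x y)
  refine le_min (v_antitone hv hx (by linarith)) (v_antitone hv hy (by linarith))

lemma v_nat {n : ℕ} (hn : 0 < n) : v (n : K) = 0 := by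
  refine le_antisymm ?_ ?_
  · have := hv.2.2.2 1 n zero_le_one (by exact_mod_cast hn)
    rwa [v_one hv] at this
  · induction n with
    | zero => omega
    | succ m ih =>
      rcases Nat.eq_zero_or_pos m with rfl | hm
      · simp [v_one hv]
      · have h := hv.2.2.1 (m : K) 1
        push_cast
        refine le_trans (le_min (ih hm) (by rw [v_one hv])) h

lemma v_nat_inv {n : ℕ} (hn : 0 < n) : v ((n : K)⁻¹) = 0 := by
  have h := hv.2.1 (n : K) (n : K)⁻¹
  rw [mul_inv_cancel₀ (by exact_mod_cast hn.ne' : (n:K) ≠ 0), v_one hv, v_nat hv hn,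
    zero_add] at h
  exact h.symm

lemma v_pow (x : K) (n : ℕ) : v (x ^ n) = n • v x := by
  induction n with
  | zero => simp [v_one hv]
  | succ m ih => rw [pow_succ, hv.2.1, ih, succ_nsmul]

lemma v_sum_of_nonneg {ι : Type*} {s : Finset ι} (hs : s.Nonempty) {f : ι → K}
    (hf : ∀ i ∈ s, 0 ≤ f i) :
    v (∑ i ∈ s, f i) = s.inf' hs (fun i => v (f i)) := by
  induction hs using Finset.Nonempty.cons_induction with
  | singleton i => simp
  | cons i s hi hs ih =>
    rw [Finset.sum_cons, Finset.inf'_cons, ← ih (fun j hj => hf j (Finset.mem_cons_of_mem hj))]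
    exact v_min_of_nonneg hv (hf i (Finset.mem_cons_self i s))
      (Finset.sum_nonneg (fun j hj => hf j (Finset.mem_cons_of_mem hj)))
    exact hs

end VB

section Defs
variable {K : Type*} [Field K] [LinearOrder K] [IsStrictOrderedRing K]

/-- upward antiderivative coefficient recursion -/
def fup (g : ℕ → K) (N : ℕ) : ℕ → K
  | 0 => 0
  | (r+1) => (g r + (N+1-r : ℕ) * fup g N r) / (r+1)

def shiftε (ε : ℕ → ℤ) : ℕ → ℤ := fun k => ε 1 * ε (k+1)

def KKf : (ℕ → ℤ) → ℕ → ℕ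
  | _, 0 => 0
  | ε, (j+1) => if ε 2 = 1 then KKf (shiftε ε) j + 1 else 1

variable (K) in
def gam (ε : ℕ → ℤ) : ℕ → ℕ → K
  | 0 => fun i => if i = 0 then 1 else 0
  | (j+1) => fun r => (j+1) *
      (if ε 1 = 1 then fup (gam (shiftε ε) j) j r
       else fup (fun i => gam (shiftε ε) j (j - i)) j (j + 1 - r))

noncomputable def Wpoly (a b : K) (ε : ℕ → ℤ) (j : ℕ) : Polynomial K :=
  ∑ i ∈ Finset.range (j+1),
    Polynomial.C (gam K ε j i) * (Polynomial.X - Polynomial.C a)^i *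
      (Polynomial.C b - Polynomial.X)^(j - i)

noncomputable def Upoly (a b : K) (ε : ℕ → ℤ) (j : ℕ) : Polynomial K :=
  Polynomial.C ((ε j : ℤ) : K) * Wpoly a b ε j

lemma gam_zero (ε : ℕ → ℤ) (i : ℕ) : gam K ε 0 i = if i = 0 then (1:K) else 0 := by
  simp [gam]

lemma gam_succ (ε : ℕ → ℤ) (j r : ℕ) :
    gam K ε (j+1) r = ((j:K)+1) *
      (if ε 1 = 1 then fup (gam K (shiftε ε) j) j r
       else fup (fun i => gam K (shiftε ε) j (j - i)) j (j + 1 - r)) := by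
  simp [gam]

lemma KKf_le (ε : ℕ → ℤ) (j : ℕ) : KKf ε j ≤ j := by
  induction j generalizing ε with
  | zero => simp [KKf]
  | succ m ih =>
    rw [KKf]
    split
    · exact Nat.succ_le_succ (ih _)
    · omega

lemma KKf_pos (ε : ℕ → ℤ) (j : ℕ) (hj : 1 ≤ j) : 1 ≤ KKf ε j := by
  cases j with
  | zero => omega
  | succ m => rw [KKf]; split <;> omega

end Defs

section FupLemmas
variable {K Γ : Type*} [Field K] [LinearOrder K] [IsStrictOrderedRing K] [AddCommGroup Γ] [LinearOrder Γ] [IsOrderedAddMonoid Γ]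
  {v : K → WithTop Γ} (hv : IsOrderedValuation v)

lemma fup_succ_mul (g : ℕ → K) (N i : ℕ) :
    ((i : K)+1) * fup g N (i+1) = g i + ((N+1-i : ℕ) : K) * fup g N i := by
  rw [fup]
  rw [mul_div_cancel₀]
  positivity

lemma fup_eq_zero (g : ℕ → K) (N : ℕ) {r : ℕ} (h : ∀ i < r, g i = 0) :
    fup g N r = 0 := by
  induction r with
  | zero => rfl
  | succ m ih =>
    rw [fup, ih (fun i hi => h i (by omega)), h m (by omega)]
    norm_num

include hv in
lemma fup_main (g : ℕ → K) (N : ℕ)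
    (hg : ∀ i ≤ N, 0 ≤ g i ∧ (0 < g i → v (g i) = 0)) :
    ∀ r, r ≤ N+1 → 0 ≤ fup g N r ∧ (0 < fup g N r → v (fup g N r) = 0) ∧
      ((∃ i < r, 0 < g i) → 0 < fup g N r) := by
  intro r
  induction r with
  | zero => exact fun _ => ⟨le_of_eq (by rw [fup]), fun h => absurd h (by rw [fup]; simp), by simp⟩
  | succ m ih =>
    intro hm
    obtain ⟨ih1, ih2, ih3⟩ := ih (by omega)
    have hmN : m ≤ N := by omega
    set A := g m with hA
    set B := ((N+1-m : ℕ) : K) * fup g N m with hB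
    have hA0 : 0 ≤ A := (hg m hmN).1
    have hcpos : (0:K) < ((N+1-m : ℕ) : K) := by
      have : 0 < N+1-m := by omega
      exact_mod_cast this
    have hB0 : 0 ≤ B := mul_nonneg hcpos.le ih1
    have hfup : fup g N (m+1) = (A + B) / ((m:K)+1) := by
      rw [fup]
    have hden : (0:K) < (m:K)+1 := by positivity
    refine ⟨by rw [hfup]; positivity, ?_, ?_⟩
    · intro hpos
      have hABpos : 0 < A + B := by
        by_contra hc
        push_neg at hc
        have : A + B = 0 := le_antisymm hc (by positivity)
        rw [hfup, this] at hpos; simp at hpos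
      have hAB : v (A + B) = min (v A) (v B) := v_min_of_nonneg hv hA0 hB0
      have hvmin : min (v A) (v B) = 0 := by
        have hAor : A = 0 ∨ v A = 0 := by
          rcases eq_or_lt_of_le hA0 with h | h
          · exact Or.inl h.symm
          · exact Or.inr ((hg m hmN).2 h)
        have hBor : B = 0 ∨ v B = 0 := by
          rcases eq_or_lt_of_le hB0 with h | h
          · exact Or.inl h.symm
          · refine Or.inr ?_
            have hf : 0 < fup g N m := by
              rcases eq_or_lt_of_le ih1 with h' | h'
              · rw [hB, ← h', mul_zero] at h; simp at h
              · exact h'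
            rw [hB, hv.2.1, ih2 hf, v_nat hv (by omega), zero_add]
        rcases hAor with hA' | hA' <;> rcases hBor with hB' | hB'
        · rw [hA', hB'] at hABpos; simp at hABpos
        · rw [hA'] at hAB ⊢
          rw [(hv.1 0).2 rfl, hB']
          simp
        · rw [hB', (hv.1 0).2 rfl, hA']; simp
        · rw [hA', hB']; simp
      have : fup g N (m+1) = (A+B) * (((m+1:ℕ):K))⁻¹ := by
        rw [hfup, div_eq_mul_inv]; push_cast; ring_nf
      rw [this, hv.2.1, hAB, hvmin, v_nat_inv hv (by omega), add_zero]
    · rintro ⟨i, hi, hgi⟩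
      have hnum : 0 < A + B := by
        rcases Nat.lt_or_ge i m with h | h
        · have : 0 < fup g N m := ih3 ⟨i, h, hgi⟩
          have : 0 < B := mul_pos hcpos this
          linarith
        · have : i = m := by omega
          subst this
          linarith [mul_nonneg hcpos.le ih1]
      rw [hfup]
      positivity

end FupLemmas

section PatLemmas
variable {K Γ : Type*} [Field K] [LinearOrder K] [IsStrictOrderedRing K] [AddCommGroup Γ] [LinearOrder Γ] [IsOrderedAddMonoid Γ]
  {v : K → WithTop Γ} (hv : IsOrderedValuation v)

include hv in
lemma v_mul_nat_pos {n : ℕ} (hn : 0 < n) {x : K} (hx : 0 < x) (hvx : v x = 0) :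
    0 < (n:K) * x ∧ v ((n:K) * x) = 0 := by
  have hnp : (0:K) < (n:K) := by exact_mod_cast hn
  exact ⟨mul_pos hnp hx, by rw [hv.2.1, hvx, v_nat hv hn, add_zero]⟩

lemma shiftε_pm {ε : ℕ → ℤ} (hε : ∀ k, ε k = 1 ∨ ε k = -1) :
    ∀ k, shiftε ε k = 1 ∨ shiftε ε k = -1 := by
  intro k
  unfold shiftε
  rcases hε 1 with h1 | h1 <;> rcases hε (k+1) with h2 | h2 <;> simp [h1, h2]

include hv in
lemma gam_pattern (j : ℕ) : ∀ (ε : ℕ → ℤ), (∀ k, ε k = 1 ∨ ε k = -1) →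
    (ε 1 = 1 →
      (∀ i < KKf ε j, gam K ε j i = (0:K)) ∧
      (∀ i, KKf ε j ≤ i → i ≤ j → 0 < gam K ε j i ∧ v (gam K ε j i) = 0)) ∧
    (ε 1 = -1 →
      (∀ i ≤ j, j - KKf ε j < i → gam K ε j i = (0:K)) ∧
      (∀ i ≤ j - KKf ε j, 0 < gam K ε j i ∧ v (gam K ε j i) = 0)) := by
  induction j with
  | zero =>
    intro ε hε
    constructor <;> intro h1 <;> constructor
    · intro i hi; simp [KKf] at hi
    · intro i hi1 hi2
      have : i = 0 := by omega
      subst this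
      exact ⟨by norm_num [show gam K ε 0 0 = (1:K) from rfl],
        by rw [show gam K ε 0 0 = (1:K) from rfl, v_one hv]⟩
    · intro i hi1 hi2; simp [KKf] at hi2
      show (if i = 0 then (1:K) else 0) = 0
      rw [if_neg (by omega)]
    · intro i hi
      simp [KKf] at hi
      subst hi
      exact ⟨by norm_num [gam], by rw [show gam K ε 0 0 = (1:K) by norm_num [gam], v_one hv]⟩
  | succ j ih =>
    intro ε hε
    have hε' := shiftε_pm hε
    have IH := ih (shiftε ε) hε'
    have hsh1 : shiftε ε 1 = ε 1 * ε 2 := rfl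
    set k' := KKf (shiftε ε) j with hk'
    have hk'le : k' ≤ j := KKf_le _ _
    have hjK : (0:K) < ((j:K)+1) := by positivity
    have hcast : ((j:K)+1) = ((j+1 : ℕ) : K) := by push_cast; ring
    -- helper to finish positivity/valuation goals
    have finish_pos : ∀ x : K, 0 < x → v x = 0 →
        0 < ((j:K)+1) * x ∧ v (((j:K)+1) * x) = 0 := by
      intro x hx hvx
      rw [hcast]
      exact v_mul_nat_pos hv (by omega) hx hvx
    rcases hε 1 with h1 | h1 <;> rcases hε 2 with h2 | h2
    · -- ε1 = 1, ε2 = 1 : orientation a, shift orientation 1, KK = k'+1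
      have hsh : shiftε ε 1 = 1 := by rw [hsh1, h1, h2]; ring
      obtain ⟨hz, hp⟩ := IH.1 hsh
      have hKK : KKf ε (j+1) = k' + 1 := by rw [KKf, if_pos h2]
      have hg : ∀ i ≤ j, 0 ≤ gam K (shiftε ε) j i ∧
          (0 < gam K (shiftε ε) j i → v (gam K (shiftε ε) j i) = 0) := by
        intro i hij
        rcases Nat.lt_or_ge i k' with h | h
        · rw [hz i h]; exact ⟨le_refl _, by simp⟩
        · exact ⟨(hp i h hij).1.le, fun _ => (hp i h hij).2⟩
      refine ⟨fun _ => ⟨?_, ?_⟩, fun hc => by rw [h1] at hc; norm_num at hc⟩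
      · intro i hi
        rw [hKK] at hi
        rw [gam_succ, if_pos h1, fup_eq_zero _ _ (fun i' hi' => hz i' (by omega)), mul_zero]
      · intro i hi1 hi2
        rw [hKK] at hi1
        rw [gam_succ, if_pos h1]
        have hm := fup_main hv _ j hg i (by omega)
        have hfpos : 0 < fup (gam K (shiftε ε) j) j i :=
          hm.2.2 ⟨k', by omega, (hp k' (le_refl _) hk'le).1⟩
        exact finish_pos _ hfpos (hm.2.1 hfpos)
    · -- ε1 = 1, ε2 = -1 : orientation a, shift orientation -1, KK = 1
      have hsh : shiftε ε 1 = -1 := by rw [hsh1, h1, h2]; ring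
      obtain ⟨hz, hp⟩ := IH.2 hsh
      have hKK : KKf ε (j+1) = 1 := by rw [KKf, if_neg (by omega)]
      have hg : ∀ i ≤ j, 0 ≤ gam K (shiftε ε) j i ∧
          (0 < gam K (shiftε ε) j i → v (gam K (shiftε ε) j i) = 0) := by
        intro i hij
        rcases Nat.lt_or_ge (j - k') i with h | h
        · rw [hz i hij h]; exact ⟨le_refl _, by simp⟩
        · exact ⟨(hp i h).1.le, fun _ => (hp i h).2⟩
      refine ⟨fun _ => ⟨?_, ?_⟩, fun hc => by rw [h1] at hc; norm_num at hc⟩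
      · intro i hi
        rw [hKK] at hi
        have : i = 0 := by omega
        subst this
        rw [gam_succ, if_pos h1, fup_eq_zero _ _ (fun i' hi' => by omega), mul_zero]
      · intro i hi1 hi2
        rw [hKK] at hi1
        rw [gam_succ, if_pos h1]
        have hm := fup_main hv _ j hg i (by omega)
        have hfpos : 0 < fup (gam K (shiftε ε) j) j i :=
          hm.2.2 ⟨0, by omega, (hp 0 (by omega)).1⟩
        exact finish_pos _ hfpos (hm.2.1 hfpos)
    · -- ε1 = -1, ε2 = 1 : orientation b, shift orientation -1, KK = k'+1
      have hsh : shiftε ε 1 = -1 := by rw [hsh1, h1, h2]; ring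
      obtain ⟨hz, hp⟩ := IH.2 hsh
      have hKK : KKf ε (j+1) = k' + 1 := by rw [KKf, if_pos h2]
      have hne : ¬ (ε 1 = 1) := by omega
      have hg : ∀ i ≤ j, 0 ≤ gam K (shiftε ε) j (j - i) ∧
          (0 < gam K (shiftε ε) j (j - i) → v (gam K (shiftε ε) j (j - i)) = 0) := by
        intro i hij
        rcases Nat.lt_or_ge (j - k') (j - i) with h | h
        · rw [hz _ (by omega) h]; exact ⟨le_refl _, by simp⟩
        · exact ⟨(hp _ h).1.le, fun _ => (hp _ h).2⟩
      refine ⟨fun hc => by rw [h1] at hc; norm_num at hc, fun _ => ⟨?_, ?_⟩⟩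
      · intro i hi1 hi2
        rw [hKK] at hi2
        rw [gam_succ, if_neg hne, fup_eq_zero _ _ (fun i' hi' => hz _ (by omega) (by omega)),
          mul_zero]
      · intro i hi
        rw [hKK] at hi
        rw [gam_succ, if_neg hne]
        have hm := fup_main hv _ j hg (j+1-i) (by omega)
        have hfpos : 0 < fup (fun i' => gam K (shiftε ε) j (j - i')) j (j+1-i) :=
          hm.2.2 ⟨k', by omega, by
            have : j - k' ≤ j - k' := le_refl _
            simpa [Nat.sub_sub_self hk'le] using (hp (j - k') this).1⟩
        exact finish_pos _ hfpos (hm.2.1 hfpos)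
    · -- ε1 = -1, ε2 = -1 : orientation b, shift orientation 1, KK = 1
      have hsh : shiftε ε 1 = 1 := by rw [hsh1, h1, h2]; ring
      obtain ⟨hz, hp⟩ := IH.1 hsh
      have hKK : KKf ε (j+1) = 1 := by rw [KKf, if_neg (by omega)]
      have hne : ¬ (ε 1 = 1) := by omega
      have hg : ∀ i ≤ j, 0 ≤ gam K (shiftε ε) j (j - i) ∧
          (0 < gam K (shiftε ε) j (j - i) → v (gam K (shiftε ε) j (j - i)) = 0) := by
        intro i hij
        rcases Nat.lt_or_ge (j - i) k' with h | h
        · rw [hz _ h]; exact ⟨le_refl _, by simp⟩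
        · exact ⟨(hp _ h (by omega)).1.le, fun _ => (hp _ h (by omega)).2⟩
      refine ⟨fun hc => by rw [h1] at hc; norm_num at hc, fun _ => ⟨?_, ?_⟩⟩
      · intro i hi1 hi2
        rw [hKK] at hi2
        have : i = j + 1 := by omega
        subst this
        rw [gam_succ, if_neg hne]
        have : j + 1 - (j+1) = 0 := by omega
        rw [this, fup_eq_zero _ _ (fun i' hi' => by omega), mul_zero]
      · intro i hi
        rw [hKK] at hi
        rw [gam_succ, if_neg hne]
        have hm := fup_main hv _ j hg (j+1-i) (by omega)
        have hfpos : 0 < fup (fun i' => gam K (shiftε ε) j (j - i')) j (j+1-i) :=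
          hm.2.2 ⟨0, by omega, by
            simpa [Nat.sub_zero] using (hp j hk'le (le_refl _)).1⟩
        exact finish_pos _ hfpos (hm.2.1 hfpos)

end PatLemmas

section PolyLemmas
variable {K : Type*} [Field K] [LinearOrder K] [IsStrictOrderedRing K]

open Polynomial

lemma fup_zero' (g : ℕ → K) (N : ℕ) : fup g N 0 = 0 := rfl

lemma gam_rec {ε : ℕ → ℤ} (hε1 : ε 1 = 1 ∨ ε 1 = -1) (j i : ℕ) (hij : i ≤ j) :
    ((i:K)+1) * gam K ε (j+1) (i+1) - ((j+1-i : ℕ):K) * gam K ε (j+1) i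
      = ((j:K)+1) * ((ε 1 : ℤ):K) * gam K (shiftε ε) j i := by
  rcases hε1 with h1 | h1
  · rw [gam_succ, gam_succ, if_pos h1, if_pos h1, h1, Int.cast_one]
    have hs := fup_succ_mul (gam K (shiftε ε) j) j i
    linear_combination ((j:K)+1) * hs
  · have hne : ¬ (ε 1 = 1) := by rw [h1]; norm_num
    rw [gam_succ, gam_succ, if_neg hne, if_neg hne, h1, Int.cast_neg, Int.cast_one]
    have hm : j + 1 - (i+1) = j - i := by omega
    have hrw : j + 1 - i = (j - i) + 1 := by omega
    rw [hm, hrw]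
    have hs := fup_succ_mul (fun i' => gam K (shiftε ε) j (j - i')) j (j - i)
    have hji : j - (j - i) = i := by omega
    rw [hji] at hs
    have hc1 : ((j + 1 - (j-i) : ℕ) : K) = (i:K) + 1 := by
      have h : j + 1 - (j - i) = i + 1 := by omega
      rw [h]; push_cast; ring
    rw [hc1] at hs
    push_cast
    linear_combination (-((j:K)+1)) * hs


variable (a b : K)

lemma Wpoly_zero (ε : ℕ → ℤ) : Wpoly a b ε 0 = 1 := by
  unfold Wpoly
  rw [Finset.sum_range_one]
  rw [show gam K ε 0 0 = (1:K) by rw [gam_zero]; simp]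
  simp

lemma derivative_Wpoly {ε : ℕ → ℤ} (hε1 : ε 1 = 1 ∨ ε 1 = -1) (j : ℕ) :
    Polynomial.derivative (Wpoly a b ε (j+1)) =
      Polynomial.C (((j:K)+1) * ((ε 1 : ℤ):K)) * Wpoly a b (shiftε ε) j := by
  set g' := gam K ε (j+1) with hg'
  set g := gam K (shiftε ε) j with hg
  have hA : ∀ r : ℕ,
      Polynomial.derivative (Polynomial.C (g' r) * (X - Polynomial.C a)^r *
        (Polynomial.C b - X)^(j+1-r)) =
      Polynomial.C (g' r) * (Polynomial.C ((r:K)) * (X - Polynomial.C a)^(r-1) *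
        (Polynomial.C b - X)^(j+1-r))
      - Polynomial.C (g' r) * (Polynomial.C (((j+1-r : ℕ):K)) * (X - Polynomial.C a)^r *
        (Polynomial.C b - X)^(j+1-r-1)) := by
    intro r
    rw [derivative_mul, derivative_mul, derivative_C, derivative_pow, derivative_pow]
    have d1 : Polynomial.derivative (X - Polynomial.C a : Polynomial K) = 1 := by simp
    have d2 : Polynomial.derivative (Polynomial.C b - X : Polynomial K) = -1 := by simp
    rw [d1, d2]
    ring
  unfold Wpoly
  rw [derivative_sum]
  rw [Finset.sum_congr rfl (fun r _ => hA r), Finset.sum_sub_distrib]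
  have hsum1 : ∑ r ∈ Finset.range (j+2), Polynomial.C (g' r) *
      (Polynomial.C ((r:K)) * (X - Polynomial.C a)^(r-1) * (Polynomial.C b - X)^(j+1-r)) =
      ∑ i ∈ Finset.range (j+1), Polynomial.C (((i:K)+1) * g' (i+1)) *
        ((X - Polynomial.C a)^i * (Polynomial.C b - X)^(j-i)) := by
    rw [Finset.sum_range_succ']
    simp only [Nat.cast_zero, Polynomial.C_0, zero_mul, mul_zero, add_zero]
    refine Finset.sum_congr rfl (fun i hi => ?_)
    have h1 : (i+1) - 1 = i := rfl
    have h2 : j + 1 - (i+1) = j - i := by omega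
    rw [h1, h2, Polynomial.C_mul]
    push_cast
    ring
  have hsum2 : ∑ r ∈ Finset.range (j+2), Polynomial.C (g' r) *
      (Polynomial.C (((j+1-r : ℕ):K)) * (X - Polynomial.C a)^r *
        (Polynomial.C b - X)^(j+1-r-1)) =
      ∑ i ∈ Finset.range (j+1), Polynomial.C (((j+1-i : ℕ):K) * g' i) *
        ((X - Polynomial.C a)^i * (Polynomial.C b - X)^(j-i)) := by
    rw [Finset.sum_range_succ]
    have hz : j + 1 - (j+1) = 0 := by omega
    rw [hz]
    simp only [Nat.cast_zero, Polynomial.C_0, zero_mul, mul_zero, add_zero]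
    refine Finset.sum_congr rfl (fun i hi => ?_)
    have h2 : j + 1 - i - 1 = j - i := by omega
    rw [h2, Polynomial.C_mul]
    ring
  rw [hsum1, hsum2, ← Finset.sum_sub_distrib]
  rw [Finset.mul_sum]
  refine Finset.sum_congr rfl (fun i hi => ?_)
  rw [Finset.mem_range] at hi
  have hrec := gam_rec (K := K) hε1 j i (by omega)
  rw [← hg', ← hg] at hrec
  rw [← sub_mul, ← Polynomial.C_sub, hrec, Polynomial.C_mul, Polynomial.C_mul, hg]
  ring

lemma Wpoly_eval_e {ε : ℕ → ℤ} (j : ℕ) :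
    (Wpoly a b ε (j+1)).eval (if ε 1 = 1 then a else b) = 0 := by
  unfold Wpoly
  rw [Polynomial.eval_finset_sum]
  by_cases h1 : ε 1 = 1
  · rw [if_pos h1]
    refine Finset.sum_eq_zero (fun r hr => ?_)
    simp only [Polynomial.eval_mul, Polynomial.eval_pow, Polynomial.eval_sub,
      Polynomial.eval_X, Polynomial.eval_C, sub_self]
    rcases Nat.eq_zero_or_pos r with rfl | hrp
    · have gz : gam K ε (j+1) 0 = 0 := by
        rw [gam_succ, if_pos h1, fup_zero', mul_zero]
      rw [gz, zero_mul, zero_mul]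
    · rw [zero_pow (by omega)]
      ring
  · rw [if_neg h1]
    refine Finset.sum_eq_zero (fun r hr => ?_)
    rw [Finset.mem_range] at hr
    simp only [Polynomial.eval_mul, Polynomial.eval_pow, Polynomial.eval_sub,
      Polynomial.eval_X, Polynomial.eval_C, sub_self]
    rcases Nat.lt_or_ge r (j+1) with hrl | hrl
    · rw [zero_pow (by omega : j+1-r ≠ 0)]
      ring
    · have hrj : r = j+1 := by omega
      subst hrj
      have gz : gam K ε (j+1) (j+1) = 0 := by
        rw [gam_succ, if_neg h1, show j + 1 - (j+1) = 0 from by omega, fup_zero', mul_zero]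
      rw [gz, zero_mul, zero_mul]


lemma Upoly_zero {ε : ℕ → ℤ} (hε0 : ε 0 = 1) : Upoly a b ε 0 = 1 := by
  unfold Upoly
  rw [Wpoly_zero, hε0]
  simp

lemma derivative_Upoly {ε : ℕ → ℤ} (hε1 : ε 1 = 1 ∨ ε 1 = -1) (i : ℕ) :
    Polynomial.derivative (Upoly a b ε (i+1)) =
      Polynomial.C ((i:K)+1) * Upoly a b (shiftε ε) i := by
  unfold Upoly
  rw [Polynomial.derivative_C_mul, derivative_Wpoly a b hε1]
  have hc : ((shiftε ε i : ℤ):K) = ((ε 1 : ℤ):K) * ((ε (i+1) : ℤ):K) := by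
    unfold shiftε; push_cast; ring
  rw [hc]
  simp only [Polynomial.C_mul]
  ring

lemma hasseDeriv_derivative' (k : ℕ) (Q : Polynomial K) :
    Polynomial.hasseDeriv k (Polynomial.derivative Q)
      = (k+1) • Polynomial.hasseDeriv (k+1) Q := by
  have h := Polynomial.hasseDeriv_comp (R := K) k 1
  have h2 := DFunLike.congr_fun h Q
  simp only [LinearMap.comp_apply, Polynomial.hasseDeriv_one'] at h2
  rw [h2, Nat.choose_succ_self_right, LinearMap.smul_apply]

lemma interp (d : ℕ) : ∀ (ε : ℕ → ℤ), (∀ k, ε k = 1 ∨ ε k = -1) → ε 0 = 1 →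
    ∀ Q : Polynomial K, Q.natDegree ≤ d →
    Q = ∑ j ∈ Finset.range (d+1),
      Polynomial.C ((Polynomial.hasseDeriv j Q).eval (if ε j * ε (j+1) = 1 then a else b)) *
        Upoly a b ε j := by
  induction d with
  | zero =>
    intro ε hε hε0 Q hQ
    rw [Finset.sum_range_one, Upoly_zero a b hε0, mul_one, Polynomial.hasseDeriv_zero]
    rw [Polynomial.eq_C_of_natDegree_le_zero hQ]
    simp
  | succ d ih =>
    intro ε hε hε0 Q hQ
    set R := ∑ j ∈ Finset.range (d+2),
      Polynomial.C ((Polynomial.hasseDeriv j Q).eval (if ε j * ε (j+1) = 1 then a else b)) *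
        Upoly a b ε j with hR
    have hε' := shiftε_pm hε
    have hε'0 : shiftε ε 0 = 1 := by
      unfold shiftε
      rcases hε 1 with h | h <;> rw [h] <;> norm_num
    have hA : ∀ i : ℕ, (if shiftε ε i * shiftε ε (i+1) = 1 then a else b)
        = (if ε (i+1) * ε (i+2) = 1 then a else b) := by
      intro i
      have : shiftε ε i * shiftε ε (i+1) = ε (i+1) * ε (i+2) := by
        unfold shiftε
        rcases hε 1 with h | h <;> rw [h] <;> ring
      rw [this]
    have hder : Polynomial.derivative Q = Polynomial.derivative R := by
      have hIH := ih (shiftε ε) hε' hε'0 (Polynomial.derivative Q)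
        (by
          have := Polynomial.natDegree_derivative_le Q
          omega)
      rw [hR, derivative_sum]
      rw [Finset.sum_range_succ']
      have hz : Polynomial.derivative (Polynomial.C ((Polynomial.hasseDeriv 0 Q).eval
          (if ε 0 * ε (0+1) = 1 then a else b)) * Upoly a b ε 0) = 0 := by
        rw [Upoly_zero a b hε0, mul_one, Polynomial.derivative_C]
      rw [hz, add_zero]
      rw [hIH]
      refine Finset.sum_congr rfl (fun i hi => ?_)
      rw [Polynomial.derivative_C_mul, derivative_Upoly a b (hε 1) i]
      rw [hA i, hasseDeriv_derivative']
      rw [Polynomial.eval_smul]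
      rw [← mul_assoc, ← Polynomial.C_mul]
      congr 2
      · push_cast
        ring
    have hzero : Polynomial.derivative (Q - R) = 0 := by
      rw [Polynomial.derivative_sub, hder, sub_self]
    have hC := Polynomial.eq_C_of_derivative_eq_zero hzero
    have heval : (Q - R).eval (if ε 1 = 1 then a else b) = 0 := by
      rw [Polynomial.eval_sub]
      have hRe : R.eval (if ε 1 = 1 then a else b) = Q.eval (if ε 1 = 1 then a else b) := by
        rw [hR, Polynomial.eval_finset_sum, Finset.sum_range_succ']
        have h0 : (if ε 0 * ε (0+1) = 1 then a else b) = (if ε 1 = 1 then a else b) := by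
          rw [hε0, one_mul]
        have hrest : ∀ i ∈ Finset.range (d+1),
            (Polynomial.C ((Polynomial.hasseDeriv (i+1) Q).eval
              (if ε (i+1) * ε (i+1+1) = 1 then a else b)) *
              Upoly a b ε (i+1)).eval (if ε 1 = 1 then a else b) = 0 := by
          intro i _
          rw [Polynomial.eval_mul]
          unfold Upoly
          rw [Polynomial.eval_mul, Wpoly_eval_e]
          ring
        rw [Finset.sum_congr rfl hrest, Finset.sum_const, smul_zero, zero_add]
        rw [Upoly_zero a b hε0, mul_one, Polynomial.eval_C, Polynomial.hasseDeriv_zero, h0]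
        rfl
      rw [hRe, sub_self]
    rw [hC, Polynomial.eval_C] at heval
    exact sub_eq_zero.mp (by rw [hC, heval, Polynomial.C_0])

end PolyLemmas

section ValForm
variable {K Γ : Type*} [Field K] [LinearOrder K] [IsStrictOrderedRing K] [AddCommGroup Γ] [LinearOrder Γ] [IsOrderedAddMonoid Γ]
  {v : K → WithTop Γ} (hv : IsOrderedValuation v)

include hv in
lemma val_form {h : ℕ → K} {j k : ℕ} (hkj : k ≤ j) {s u : K} (hs : 0 ≤ s) (hu : 0 ≤ u)
    (hz : ∀ i < k, h i = 0) (hp : ∀ i, k ≤ i → i ≤ j → 0 < h i ∧ v (h i) = 0) :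
    v (∑ i ∈ Finset.range (j+1), h i * s^i * u^(j-i)) =
      k • v s + (j-k) • v (s+u) := by
  set W := ∑ i ∈ Finset.range (j+1), h i * s^i * u^(j-i) with hW
  set S := s^k * (s+u)^(j-k) with hS
  have hS0 : 0 ≤ S := by positivity
  -- rewrite W as a sum over range (j-k+1)
  have hWsum : W = ∑ l ∈ Finset.range (j-k+1), h (k+l) * s^(k+l) * u^(j-(k+l)) := by
    rw [hW, Finset.range_eq_Ico, ← Finset.sum_Ico_consecutive _ (Nat.zero_le k) (by omega : k ≤ j+1)]
    rw [Finset.sum_eq_zero (fun i hi => by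
      rw [Finset.mem_Ico] at hi
      rw [hz i hi.2, zero_mul, zero_mul]), zero_add]
    rw [Finset.sum_Ico_eq_sum_range]
    have : j + 1 - k = j - k + 1 := by omega
    rw [this]
  have hne : (Finset.range (j-k+1)).Nonempty := Finset.nonempty_range_add_one
  -- the min coefficient
  set m := (Finset.range (j-k+1)).inf' hne (fun l => h (k+l) / (((j-k).choose l : ℕ) : K))
    with hm
  have hbinom : ∀ l ∈ Finset.range (j-k+1), (0:K) < (((j-k).choose l : ℕ) : K) := by
    intro l hl
    rw [Finset.mem_range] at hl
    have := Nat.choose_pos (by omega : l ≤ j - k)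
    exact_mod_cast this
  have hmle : ∀ l ∈ Finset.range (j-k+1), m * (((j-k).choose l : ℕ) : K) ≤ h (k+l) := by
    intro l hl
    have h1 : m ≤ h (k+l) / (((j-k).choose l : ℕ) : K) := Finset.inf'_le _ hl
    rw [le_div_iff₀ (hbinom l hl)] at h1
    exact h1
  have hmpos : 0 < m := by
    obtain ⟨l, hl, hml⟩ := Finset.exists_mem_eq_inf' hne
      (fun l => h (k+l) / (((j-k).choose l : ℕ) : K))
    rw [hm, hml]
    have := hp (k+l) (by omega) (by rw [Finset.mem_range] at hl; omega)
    exact div_pos this.1 (hbinom l hl)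
  have hvm : v m = 0 := by
    obtain ⟨l, hl, hml⟩ := Finset.exists_mem_eq_inf' hne
      (fun l => h (k+l) / (((j-k).choose l : ℕ) : K))
    rw [Finset.mem_range] at hl
    have hpl := hp (k+l) (by omega) (by omega)
    rw [hm, hml, div_eq_mul_inv, hv.2.1, hpl.2,
      v_nat_inv hv (Nat.choose_pos (by omega : l ≤ j - k)), add_zero]
  set M := ∑ l ∈ Finset.range (j-k+1), h (k+l) with hM
  have hMterm : ∀ l ∈ Finset.range (j-k+1), 0 ≤ h (k+l) := by
    intro l hl
    rw [Finset.mem_range] at hl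
    exact (hp (k+l) (by omega) (by omega)).1.le
  have hvM : v M = 0 := by
    rw [hM, v_sum_of_nonneg hv hne hMterm]
    refine le_antisymm ?_ ?_
    · refine le_trans (Finset.inf'_le _ (Finset.mem_range.mpr (by omega : 0 < j-k+1))) ?_
      rw [(hp (k+0) (by omega) (by omega)).2]
    · rw [Finset.le_inf'_iff]
      intro l hl
      rw [Finset.mem_range] at hl
      rw [(hp (k+l) (by omega) (by omega)).2]
  -- lower bound m * S ≤ W
  have hlow : m * S ≤ W := by
    rw [hWsum, hS, add_pow, Finset.mul_sum, Finset.mul_sum]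
    refine Finset.sum_le_sum (fun l hl => ?_)
    rw [Finset.mem_range] at hl
    have hexp : j - (k+l) = j - k - l := by omega
    rw [hexp, pow_add]
    calc m * (s^k * (s^l * u^(j-k-l) * (((j-k).choose l : ℕ) : K)))
        = (m * (((j-k).choose l : ℕ) : K)) * (s^k * s^l * u^(j-k-l)) := by ring
      _ ≤ h (k+l) * (s^k * s^l * u^(j-k-l)) := by
          refine mul_le_mul_of_nonneg_right (hmle l (Finset.mem_range.mpr hl)) (by positivity)
      _ = h (k+l) * (s^k * s^l) * u^(j-k-l) := by ring
  -- upper bound W ≤ M * S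
  have hup : W ≤ M * S := by
    rw [hWsum, hM, Finset.sum_mul]
    refine Finset.sum_le_sum (fun l hl => ?_)
    rw [Finset.mem_range] at hl
    have hexp : j - (k+l) = j - k - l := by omega
    have hpows : s^l * u^(j-k-l) ≤ (s+u)^(j-k) := by
      calc s^l * u^(j-k-l) ≤ (s+u)^l * (s+u)^(j-k-l) := by
            refine mul_le_mul (pow_le_pow_left₀ hs (by linarith) l)
              (pow_le_pow_left₀ hu (by linarith) _) (by positivity) (by positivity)
        _ = (s+u)^(j-k) := by rw [← pow_add]; congr 1; omega
    rw [hexp, pow_add, hS]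
    calc h (k+l) * (s^k * s^l) * u^(j-k-l) = h (k+l) * (s^k * (s^l * u^(j-k-l))) := by ring
      _ ≤ h (k+l) * (s^k * (s+u)^(j-k)) := by
          refine mul_le_mul_of_nonneg_left ?_ (hMterm l (Finset.mem_range.mpr hl))
          refine mul_le_mul_of_nonneg_left hpows (by positivity)
  have hW0 : 0 ≤ m * S := by positivity
  have hvchain1 : v W ≤ v (m * S) := v_antitone hv hW0 hlow
  have hvchain2 : v (M * S) ≤ v W := v_antitone hv (le_trans hW0 hlow) hup
  rw [hv.2.1, hvm, zero_add] at hvchain1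
  rw [hv.2.1, hvM, zero_add] at hvchain2
  have hvW : v W = v S := le_antisymm hvchain1 hvchain2
  rw [hvW, hS, hv.2.1, v_pow hv, v_pow hv]

end ValForm

section Assemble
variable {K Γ : Type*} [Field K] [LinearOrder K] [IsStrictOrderedRing K] [AddCommGroup Γ] [LinearOrder Γ] [IsOrderedAddMonoid Γ]
  {v : K → WithTop Γ} (hv : IsOrderedValuation v)

lemma hasseDeriv_top {d : ℕ} (Q : Polynomial K) (h : Q.natDegree ≤ d) :
    Polynomial.hasseDeriv d Q = Polynomial.C (Q.coeff d) := by
  ext n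
  rw [Polynomial.hasseDeriv_coeff]
  rcases Nat.eq_zero_or_pos n with rfl | hn
  · simp
  · rw [Polynomial.coeff_eq_zero_of_natDegree_lt (by omega : Q.natDegree < n + d),
      Polynomial.coeff_C, if_neg (by omega), mul_zero]

lemma hasseDeriv_C_mul' (c : K) (Q : Polynomial K) (j : ℕ) :
    Polynomial.hasseDeriv j (Polynomial.C c * Q) = Polynomial.C c * Polynomial.hasseDeriv j Q := by
  rw [← Polynomial.smul_eq_C_mul, ← Polynomial.smul_eq_C_mul, map_smul]

include hv in
lemma v_sign {e : ℤ} (he : e = 1 ∨ e = -1) : v ((e : K)) = 0 := by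
  rcases he with h | h <;> rw [h]
  · rw [Int.cast_one, v_one hv]
  · rw [Int.cast_neg, Int.cast_one, v_neg hv, v_one hv]

end Assemble


/-- **Valuation of `P(x)` on a Thom interval** (Theorem `thValThom` (a)).
With `ε_k = σ₀σ_k`, `a_k = a` if `ε_k ε_{k+1} = 1` and `a_k = b` otherwise,
`ν_k = v(P^[k](a_k))` (`ν_d = v(leading coefficient)`), `δ = v(b−a)`, there are integers
`k₂,…,k_d` with `1 ≤ k_j ≤ j` (and `k₀ = 0`, `k₁ = 1`) such that for all `x ∈ [a,b]`, with
`t₁ = (x−a)/(b−a)`, `t₂ = 1 − t₁`, `τ' = v(t₁)` if `ε₁ = 1` and `τ' = v(t₂)` if `ε₁ = −1`,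
`v(P(x)) = min_{0 ≤ j ≤ d} ( ν_j + j·δ + k_j·τ' )`. -/
theorem valuation_thom_interval {K Γ : Type*} [Field K] [LinearOrder K] [IsStrictOrderedRing K]
    [AddCommGroup Γ] [LinearOrder Γ] [IsOrderedAddMonoid Γ] (v : K → WithTop Γ) (hv : IsOrderedValuation v)
    (P : Polynomial K) (d : ℕ) (hd : 1 ≤ d) (hdeg : P.natDegree = d)
    (a b : K) (hab : a < b)
    (σ : ℕ → ℤ) (hσ : ∀ k, k ≤ d → σ k = 1 ∨ σ k = -1)
    (hga : ∀ k, k < d → 0 ≤ (σ k : K) * (Polynomial.hasseDeriv k P).eval a)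
    (hgb : ∀ k, k < d → 0 ≤ (σ k : K) * (Polynomial.hasseDeriv k P).eval b)
    (hlead : 0 < (σ d : K) * P.leadingCoeff) :
    ∃ kk : ℕ → ℕ, kk 0 = 0 ∧ kk 1 = 1 ∧
      (∀ j, 2 ≤ j → j ≤ d → 1 ≤ kk j ∧ kk j ≤ j) ∧
      ∀ x : K, a ≤ x → x ≤ b →
        v (P.eval x) =
          (Finset.range (d + 1)).inf' Finset.nonempty_range_add_one
            (fun j =>
              (if j = d then v P.leadingCoeff
               else v ((Polynomial.hasseDeriv j P).eval
                  (if (σ 0 * σ j) * (σ 0 * σ (j + 1)) = 1 then a else b)))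
              + j • v (b - a)
              + kk j • (if σ 0 * σ 1 = 1 then v ((x - a) / (b - a))
                        else v (1 - (x - a) / (b - a)))) := by
  classical
  set ε : ℕ → ℤ := fun k => if k ≤ d then σ 0 * σ k else 1 with hεdef
  have hε : ∀ k, ε k = 1 ∨ ε k = -1 := by
    intro k
    by_cases hk : k ≤ d
    · simp only [hεdef, if_pos hk]
      rcases hσ 0 (by omega) with h0 | h0 <;> rcases hσ k hk with h1 | h1 <;>
        rw [h0, h1] <;> norm_num
    · simp [hεdef, hk]
  have hε0 : ε 0 = 1 := by
    simp only [hεdef, if_pos (by omega : 0 ≤ d)]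
    rcases hσ 0 (by omega) with h0 | h0 <;> rw [h0] <;> norm_num
  have hKK0 : KKf ε 0 = 0 := by rw [KKf]
  have hKK1 : KKf ε 1 = 1 := by
    rw [show (1:ℕ) = 0 + 1 from rfl, KKf]
    split <;> simp [KKf]
  refine ⟨KKf ε, hKK0, hKK1, fun j h2 hjd => ⟨KKf_pos ε j (by omega), KKf_le ε j⟩, ?_⟩
  intro x hax hxb
  set P' : Polynomial K := Polynomial.C ((σ 0 : ℤ) : K) * P with hP'
  have hσ0 : (σ 0 = 1) ∨ (σ 0 = -1) := hσ 0 (by omega)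
  have hvσ0 : v ((σ 0 : ℤ) : K) = 0 := v_sign hv hσ0
  have hσ0sq : ((σ 0 : ℤ) : K) * ((σ 0 : ℤ) : K) = 1 := by
    rcases hσ0 with h | h <;> rw [h] <;> norm_num
  have hσ0ne : ((σ 0 : ℤ) : K) ≠ 0 := by
    rcases hσ0 with h | h <;> rw [h] <;> norm_num
  have hdegP' : P'.natDegree ≤ d := by
    rw [hP', Polynomial.natDegree_C_mul hσ0ne, hdeg]
  have hba : (0:K) < b - a := by linarith
  have hbane : b - a ≠ 0 := ne_of_gt hba
  have hxa : (0:K) ≤ x - a := by linarith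
  have hbx : (0:K) ≤ b - x := by linarith
  have hsum1 : (x - a) + (b - x) = b - a := by ring
  have hsum2 : (b - x) + (x - a) = b - a := by ring
  have hvxa : v (x - a) = v ((x-a)/(b-a)) + v (b-a) := by
    conv_lhs => rw [show x - a = ((x-a)/(b-a)) * (b-a) from by field_simp]
    rw [hv.2.1]
  have hvbx : v (b - x) = v (1 - (x-a)/(b-a)) + v (b-a) := by
    conv_lhs => rw [show b - x = (1 - (x-a)/(b-a)) * (b-a) from by field_simp; ring]
    rw [hv.2.1]
  -- the interpolation identity evaluated at x
  have hinterp := interp a b d ε hε hε0 P' hdegP'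
  have hevalx := congrArg (Polynomial.eval x) hinterp
  rw [Polynomial.eval_finset_sum] at hevalx
  simp only [Polynomial.eval_mul, Polynomial.eval_C] at hevalx
  -- notation for terms
  set lamq : ℕ → K := fun j => (Polynomial.hasseDeriv j P').eval
    (if ε j * ε (j+1) = 1 then a else b) with hlamq
  set Wx : ℕ → K := fun j => (Wpoly a b ε j).eval x with hWx
  have hUev : ∀ j, (Upoly a b ε j).eval x = ((ε j : ℤ) : K) * Wx j := by
    intro j
    rw [Upoly, Polynomial.eval_mul, Polynomial.eval_C, hWx]
  have hWev : ∀ j, Wx j = ∑ i ∈ Finset.range (j+1),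
      gam K ε j i * (x-a)^i * (b-x)^(j-i) := by
    intro j
    rw [hWx]
    simp only [Wpoly, Polynomial.eval_finset_sum, Polynomial.eval_mul, Polynomial.eval_pow,
      Polynomial.eval_sub, Polynomial.eval_C, Polynomial.eval_X]
  -- nonnegativity of gam coefficients
  have hgnn : ∀ j i, i ≤ j → 0 ≤ gam K ε j i := by
    intro j i hij
    have hpat := gam_pattern hv j ε hε
    rcases hε 1 with h1 | h1
    · obtain ⟨hz, hp⟩ := hpat.1 h1
      rcases Nat.lt_or_ge i (KKf ε j) with h | h
      · rw [hz i h]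
      · exact (hp i h hij).1.le
    · obtain ⟨hz, hp⟩ := hpat.2 h1
      rcases Nat.lt_or_ge (j - KKf ε j) i with h | h
      · rw [hz i hij h]
      · exact (hp i h).1.le
  have hWnn : ∀ j, 0 ≤ Wx j := by
    intro j
    rw [hWev]
    refine Finset.sum_nonneg (fun i hi => ?_)
    rw [Finset.mem_range] at hi
    have := hgnn j i (by omega)
    positivity
  -- nsmul juggling lemma
  have hjuggle : ∀ (τ δ' : WithTop Γ) (k j : ℕ), k ≤ j →
      k • (τ + δ') + (j - k) • δ' = k • τ + j • δ' := by
    intro τ δ' k j hkj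
    rw [nsmul_add, add_assoc, ← add_nsmul]
    congr 2
    omega
  -- valuation of Wx
  have hWval : ∀ j ≤ d, v (Wx j) =
      KKf ε j • (if σ 0 * σ 1 = 1 then v ((x-a)/(b-a)) else v (1 - (x-a)/(b-a)))
        + j • v (b-a) := by
    intro j hjd
    have hkkj : KKf ε j ≤ j := KKf_le ε j
    have hε1 : ε 1 = σ 0 * σ 1 := by
      simp only [hεdef]
      rw [if_pos (by omega : 1 ≤ d)]
    have hpat := gam_pattern hv j ε hε
    rcases hε 1 with h1 | h1
    · obtain ⟨hz, hp⟩ := hpat.1 h1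
      rw [hWev, val_form hv hkkj hxa hbx hz hp, hsum1,
        if_pos (show σ 0 * σ 1 = 1 by rw [← hε1]; exact h1), hvxa, hjuggle _ _ _ _ hkkj]
    · obtain ⟨hz, hp⟩ := hpat.2 h1
      have hrefl : Wx j = ∑ l ∈ Finset.range (j+1),
          gam K ε j (j - l) * (b-x)^l * (x-a)^(j-l) := by
        rw [hWev]
        rw [← Finset.sum_range_reflect (fun l => gam K ε j (j-l) * (b-x)^l * (x-a)^(j-l)) (j+1)]
        refine Finset.sum_congr rfl (fun i hi => ?_)
        rw [Finset.mem_range] at hi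
        have h1' : j + 1 - 1 - i = j - i := by omega
        have h2' : j - (j - i) = i := by omega
        rw [h1', h2']
        ring
      have hz' : ∀ l < KKf ε j, gam K ε j (j - l) = 0 := by
        intro l hl
        exact hz (j-l) (by omega) (by omega)
      have hp' : ∀ l, KKf ε j ≤ l → l ≤ j → 0 < gam K ε j (j-l) ∧ v (gam K ε j (j-l)) = 0 := by
        intro l hl1 hl2
        exact hp (j-l) (by omega)
      rw [hrefl, val_form hv hkkj hbx hxa hz' hp', hsum2,
        if_neg (show ¬ (σ 0 * σ 1 = 1) by rw [← hε1, h1]; norm_num), hvbx,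
        hjuggle _ _ _ _ hkkj]
  -- per-term sign and valuation
  have hterm : ∀ j ∈ Finset.range (d+1),
      (0 ≤ (Polynomial.hasseDeriv j P').eval (if ε j * ε (j+1) = 1 then a else b) *
        (Upoly a b ε j).eval x) ∧
      v ((Polynomial.hasseDeriv j P').eval (if ε j * ε (j+1) = 1 then a else b) *
        (Upoly a b ε j).eval x) =
      (if j = d then v P.leadingCoeff
       else v ((Polynomial.hasseDeriv j P).eval
          (if (σ 0 * σ j) * (σ 0 * σ (j + 1)) = 1 then a else b)))
      + j • v (b - a)
      + KKf ε j • (if σ 0 * σ 1 = 1 then v ((x - a) / (b - a))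
                else v (1 - (x - a) / (b - a))) := by
    intro j hj
    rw [Finset.mem_range] at hj
    have hjd : j ≤ d := by omega
    set pt := (if ε j * ε (j+1) = 1 then a else b) with hpt
    have hpt_mem : pt = a ∨ pt = b := by rw [hpt]; split <;> [left; right] <;> rfl
    have hlam : (Polynomial.hasseDeriv j P').eval pt
        = ((σ 0:ℤ):K) * (Polynomial.hasseDeriv j P).eval pt := by
      rw [hP', hasseDeriv_C_mul', Polynomial.eval_mul, Polynomial.eval_C]
    have hsign : 0 ≤ ((ε j : ℤ):K) * ((Polynomial.hasseDeriv j P').eval pt) := by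
      rw [hlam, ← mul_assoc]
      have hεj : ((ε j : ℤ):K) * ((σ 0:ℤ):K) = (σ j : K) := by
        simp only [hεdef]
        rw [if_pos hjd]
        rcases hσ0 with h | h <;> rw [h] <;> push_cast <;> ring
      rw [hεj]
      rcases Nat.lt_or_ge j d with hlt | hge
      · rcases hpt_mem with h | h <;> rw [h]
        · exact hga j hlt
        · exact hgb j hlt
      · have hjd' : j = d := by omega
        rw [hjd', hasseDeriv_top P (le_of_eq hdeg), Polynomial.eval_C,
          show P.coeff d = P.leadingCoeff by rw [Polynomial.leadingCoeff, hdeg]]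
        exact hlead.le
    constructor
    · rw [hUev j]
      rw [show (Polynomial.hasseDeriv j P').eval pt * (((ε j:ℤ):K) * Wx j)
          = (((ε j:ℤ):K) * (Polynomial.hasseDeriv j P').eval pt) * Wx j from by ring]
      exact mul_nonneg hsign (hWnn j)
    · rw [hUev j, hv.2.1, hv.2.1, v_sign hv (hε j), zero_add, hWval j hjd]
      have hν : v ((Polynomial.hasseDeriv j P').eval pt) =
          (if j = d then v P.leadingCoeff else v ((Polynomial.hasseDeriv j P).eval
            (if (σ 0 * σ j) * (σ 0 * σ (j + 1)) = 1 then a else b))) := by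
        rw [hlam, hv.2.1, hvσ0, zero_add]
        rcases Nat.lt_or_ge j d with hlt | hge
        · rw [if_neg (by omega)]
          congr 2
          rw [hpt]
          simp only [hεdef]
          rw [if_pos hjd, if_pos (by omega : j+1 ≤ d)]
        · have hjd' : j = d := by omega
          rw [hjd', if_pos rfl, hasseDeriv_top P (le_of_eq hdeg), Polynomial.eval_C,
            show P.coeff d = P.leadingCoeff by rw [Polynomial.leadingCoeff, hdeg]]
      rw [hν]
      rw [add_comm (KKf ε j • (if σ 0 * σ 1 = 1 then v ((x - a) / (b - a))
            else v (1 - (x - a) / (b - a)))) (j • v (b-a)), ← add_assoc]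
  -- conclude
  have hPP' : v (Polynomial.eval x P) = v (Polynomial.eval x P') := by
    rw [hP', Polynomial.eval_mul, Polynomial.eval_C, hv.2.1, hvσ0, zero_add]
  rw [hPP', hevalx, v_sum_of_nonneg hv Finset.nonempty_range_add_one (fun j hj => (hterm j hj).1)]
  exact Finset.inf'_congr Finset.nonempty_range_add_one rfl (fun j hj => (hterm j hj).2)
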